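/- For every m ≥ 2 there is an instance on m identical machines with m(m−1) unit jobs and one job of length m in which every pure Nash equilibrium under EQUI has makespan at least (2 − 2/m) times the optimal makespan; in particular OPT = m and every equilibrium has makespan at least 2m − 2. -/

import Mathlib

/-- Load of machine `j` (identical machines, job lengths `p`). -/
def idLoad {n m : ℕ} (p : Fin n → ℝ) (σ : Fin n → Fin m) (j : Fin m) : ℝ :=
  ∑ i ∈ Finset.univ.filter (fun i => σ i = j), p i

/-- EQUI cost of job `i` on identical machines. -/
def idEquiCost {n m : ℕ} (p : Fin n → ℝ) (σ : Fin n → Fin m) (i : Fin n) : ℝ :=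
  ∑ i' ∈ Finset.univ.filter (fun i' => σ i' = σ i), min (p i) (p i')

/-- Pure Nash equilibrium under EQUI on identical machines. -/
def idEquiNE {n m : ℕ} (p : Fin n → ℝ) (σ : Fin n → Fin m) : Prop :=
  ∀ (i : Fin n) (b : Fin m), idEquiCost p σ i ≤ idEquiCost p (Function.update σ i b) i

namespace EquiAux

/-- number of jobs on machine j -/
def cnt {n M : ℕ} (σ : Fin n → Fin M) (j : Fin M) : ℕ :=
  (Finset.univ.filter (fun i => σ i = j)).card

/-- the big job -/
def istar (m : ℕ) : Fin (m * (m - 1) + 1) := ⟨m * (m - 1), Nat.lt_succ_self _⟩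

lemma hp' {m : ℕ} (p : Fin (m * (m - 1) + 1) → ℝ)
    (hp : ∀ i, p i = if i.val < m * (m - 1) then 1 else (m : ℝ)) :
    ∀ i, p i = 1 + (if i = istar m then (m : ℝ) - 1 else 0) := by
  intro i
  rw [hp i]
  have hi := i.isLt
  by_cases h : i = istar m
  · subst h; simp [istar]
  · have hv : i.val ≠ m * (m - 1) := fun hc => h (Fin.ext hc)
    have : i.val < m * (m - 1) := by omega
    simp [this, h]

lemma load_eq {m : ℕ} (p : Fin (m * (m - 1) + 1) → ℝ)
    (hp : ∀ i, p i = if i.val < m * (m - 1) then 1 else (m : ℝ))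
    (σ : Fin (m * (m - 1) + 1) → Fin m) (j : Fin m) :
    idLoad p σ j = (cnt σ j : ℝ) + (if σ (istar m) = j then (m : ℝ) - 1 else 0) := by
  unfold idLoad cnt
  rw [Finset.sum_congr rfl (fun i _ => hp' p hp i), Finset.sum_add_distrib,
    Finset.sum_const, Finset.sum_ite_eq']
  simp [Finset.mem_filter]

lemma one_le_p {m : ℕ} (hm : 2 ≤ m) (p : Fin (m * (m - 1) + 1) → ℝ)
    (hp : ∀ i, p i = if i.val < m * (m - 1) then 1 else (m : ℝ)) :
    ∀ i, (1 : ℝ) ≤ p i := by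
  intro i
  rw [hp i]
  split
  · exact le_refl 1
  · exact_mod_cast Nat.one_le_iff_ne_zero.mpr (by omega)

/-- EQUI cost of a unit job is just the number of jobs on its machine. -/
lemma unit_cost {m : ℕ} (hm : 2 ≤ m) (p : Fin (m * (m - 1) + 1) → ℝ)
    (hp : ∀ i, p i = if i.val < m * (m - 1) then 1 else (m : ℝ))
    (σ : Fin (m * (m - 1) + 1) → Fin m)
    {i : Fin (m * (m - 1) + 1)} (hi : i ≠ istar m) :
    idEquiCost p σ i = (cnt σ (σ i) : ℝ) := by
  unfold idEquiCost cnt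
  have hpi : p i = 1 := by
    rw [hp i]
    have hv : i.val ≠ m * (m - 1) := fun hc => hi (Fin.ext hc)
    have := i.isLt
    simp [show i.val < m * (m - 1) by omega]
  have key : ∑ i' ∈ Finset.univ.filter (fun i' => σ i' = σ i), min (p i) (p i')
      = ∑ _i' ∈ Finset.univ.filter (fun i' => σ i' = σ i), (1 : ℝ) :=
    Finset.sum_congr rfl fun i' _ => by
      rw [hpi]; exact min_eq_left (one_le_p hm p hp i')
  rw [key, Finset.sum_const]
  simp

lemma cnt_update {n M : ℕ} (σ : Fin n → Fin M)
    {i : Fin n} {b : Fin M} (h : σ i ≠ b) :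
    cnt (Function.update σ i b) b = cnt σ b + 1 := by
  unfold cnt
  have heq : (Finset.univ.filter (fun i' => Function.update σ i b i' = b))
      = insert i (Finset.univ.filter (fun i' => σ i' = b)) := by
    ext x
    by_cases hx : x = i
    · subst hx; simp [Function.update_self]
    · simp [Function.update_of_ne hx, hx]
  rw [heq, Finset.card_insert_of_notMem (by simp [h])]

end EquiAux

open EquiAux in
theorem equi_identical_poa_lower_all_equilibria
    (m : ℕ) (hm : 2 ≤ m) (p : Fin (m * (m - 1) + 1) → ℝ)
    (hp : ∀ i, p i = if i.val < m * (m - 1) then 1 else (m : ℝ)) :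
    (∃ τ : Fin (m * (m - 1) + 1) → Fin m, (⨆ j, idLoad p τ j) = (m : ℝ)) ∧
    (∀ τ : Fin (m * (m - 1) + 1) → Fin m, (m : ℝ) ≤ ⨆ j, idLoad p τ j) ∧
    (∀ σ : Fin (m * (m - 1) + 1) → Fin m, idEquiNE p σ →
      (2 - 2 / (m : ℝ)) * (m : ℝ) ≤ ⨆ j, idLoad p σ j) := by
  have hm0 : (0 : ℝ) < m := by positivity
  have hmpos : 0 < m := by omega
  haveI : Nonempty (Fin m) := ⟨⟨0, hmpos⟩⟩
  have hm1cast : (((m - 1 : ℕ)) : ℝ) = (m : ℝ) - 1 := by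
    push_cast [Nat.cast_sub (show 1 ≤ m by omega)]; ring
  have hNcast : (((m * (m - 1) : ℕ)) : ℝ) = (m : ℝ) * ((m : ℝ) - 1) := by
    push_cast [hm1cast]; ring
  -- total load is m^2
  have htotal : ∀ σ : Fin (m * (m - 1) + 1) → Fin m,
      ∑ j, idLoad p σ j = (m : ℝ) ^ 2 := by
    intro σ
    unfold idLoad
    rw [Finset.sum_fiberwise_of_maps_to (fun i _ => Finset.mem_univ (σ i))]
    rw [Finset.sum_congr rfl (fun i _ => hp' p hp i), Finset.sum_add_distrib,
      Finset.sum_const, Finset.sum_ite_eq' Finset.univ (istar m)]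
    simp only [Finset.mem_univ, if_true, Finset.card_univ, Fintype.card_fin, nsmul_eq_mul,
      mul_one]
    push_cast [hNcast]
    ring
  -- part 2 first
  have part2 : ∀ τ : Fin (m * (m - 1) + 1) → Fin m, (m : ℝ) ≤ ⨆ j, idLoad p τ j := by
    intro τ
    have hb : BddAbove (Set.range (idLoad p τ)) := (Set.finite_range _).bddAbove
    have hle : ∑ j, idLoad p τ j ≤ ∑ _j : Fin m, ⨆ j, idLoad p τ j :=
      Finset.sum_le_sum fun j _ => le_ciSup hb j
    rw [htotal τ, Finset.sum_const, Finset.card_univ, Fintype.card_fin, nsmul_eq_mul] at hle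
    nlinarith [hle]
  refine ⟨?_, part2, ?_⟩
  · -- part 1: exhibit an optimal assignment
    have hdiv : ∀ i : Fin (m * (m - 1) + 1), i.val < m * (m - 1) → i.val / m + 1 < m := by
      intro i hi
      have : i.val / m < m - 1 := Nat.div_lt_of_lt_mul hi
      omega
    set τ : Fin (m * (m - 1) + 1) → Fin m := fun i =>
      if h : i.val < m * (m - 1) then ⟨i.val / m + 1, hdiv i h⟩ else ⟨0, hmpos⟩ with hτ
    refine ⟨τ, le_antisymm (ciSup_le ?_) (part2 τ)⟩
    intro j
    have hτstar : τ (istar m) = ⟨0, hmpos⟩ := by simp [hτ, istar]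
    rw [load_eq p hp]
    by_cases hj : j = ⟨0, hmpos⟩
    · -- only the big job is on machine 0
      subst hj
      have hone : cnt τ ⟨0, hmpos⟩ = 1 := by
        unfold cnt
        rw [show Finset.univ.filter (fun i => τ i = ⟨0, hmpos⟩) = {istar m} from ?_,
          Finset.card_singleton]
        ext i
        simp only [Finset.mem_filter, Finset.mem_univ, true_and, Finset.mem_singleton]
        constructor
        · intro h
          by_contra hne
          have hv : i.val ≠ m * (m - 1) := fun hc => hne (Fin.ext hc)
          have hlt : i.val < m * (m - 1) := by have := i.isLt; omega
          rw [hτ] at h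
          simp only [hlt, dif_pos] at h
          exact absurd (congrArg Fin.val h) (by simp)
        · intro h; subst h; exact hτstar
      rw [hone, hτstar, if_pos rfl]
      push_cast
      linarith
    · -- unit machines carry at most m unit jobs
      rw [hτstar, if_neg (fun h => hj h.symm), add_zero]
      have hcard : cnt τ j ≤ m := by
        unfold cnt
        have h1 : (Finset.univ.filter (fun i => τ i = j)).card
            ≤ (Finset.univ : Finset (Fin m)).card := by
          apply Finset.card_le_card_of_injOn (fun i => ⟨i.val % m, Nat.mod_lt _ hmpos⟩)
            (fun _ _ => Finset.mem_univ _)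
          intro i1 h1 i2 h2 heq
          simp only [Finset.coe_filter, Set.mem_setOf_eq, Finset.mem_univ, true_and] at h1 h2
          have hv : i1.val % m = i2.val % m := congrArg Fin.val heq
          have hlt1 : i1.val < m * (m - 1) := by
            by_contra hc
            rw [hτ] at h1; simp only [hc, dif_neg] at h1
            exact hj h1.symm
          have hlt2 : i2.val < m * (m - 1) := by
            by_contra hc
            rw [hτ] at h2; simp only [hc, dif_neg] at h2
            exact hj h2.symm
          rw [hτ] at h1 h2
          simp only [hlt1, hlt2, dif_pos] at h1 h2
          have hd : i1.val / m = i2.val / m := by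
            have := congrArg Fin.val (h1.trans h2.symm)
            simpa using this
          refine Fin.ext ?_
          have e1 := Nat.div_add_mod i1.val m
          have e2 := Nat.div_add_mod i2.val m
          rw [hd, hv] at e1
          omega
        simpa using h1
      exact_mod_cast hcard
  · -- part 3: equilibria
    intro σ hNE
    set jstar := σ (istar m) with hjstar
    set c := cnt σ jstar with hc
    -- every machine has at most c+1 jobs
    have hbound : ∀ b : Fin m, cnt σ b ≤ c + 1 := by
      intro b
      by_cases hb : b = jstar
      · subst hb; omega
      by_cases hz : cnt σ b = 0
      · omega
      · obtain ⟨i, hi⟩ := Finset.card_pos.mp (Nat.pos_of_ne_zero hz)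
        simp only [Finset.mem_filter, Finset.mem_univ, true_and] at hi
        have hine : i ≠ istar m := by
          intro h
          apply hb
          rw [← hi, h]
        have hkey := hNE i jstar
        rw [unit_cost hm p hp σ hine, hi] at hkey
        have hσib : σ i ≠ jstar := by rw [hi]; exact hb
        rw [unit_cost hm p hp _ hine, Function.update_self,
          cnt_update σ hσib] at hkey
        exact_mod_cast hkey
    -- counting
    have hsum : m * (m - 1) + 1 = ∑ j, cnt σ j := by
      have := Finset.card_eq_sum_card_fiberwise
        (f := σ) (s := Finset.univ) (t := Finset.univ) (fun i _ => Finset.mem_univ _)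
      simpa [cnt] using this
    have hsplit : ∑ j, cnt σ j = (∑ j ∈ Finset.univ.erase jstar, cnt σ j) + c :=
      (Finset.sum_erase_add _ _ (Finset.mem_univ _)).symm
    have herase : ∑ j ∈ Finset.univ.erase jstar, cnt σ j ≤ (m - 1) * (c + 1) := by
      have := Finset.sum_le_card_nsmul (Finset.univ.erase jstar) (cnt σ) (c + 1)
        (fun b _ => hbound b)
      rwa [Finset.card_erase_of_mem (Finset.mem_univ _), Finset.card_univ,
        Fintype.card_fin, smul_eq_mul] at this
    -- conclude c ≥ m - 1
    have hcge : m - 1 ≤ c := by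
      by_contra hcon
      push_neg at hcon
      obtain ⟨m', rfl⟩ : ∃ m', m = m' + 2 := ⟨m - 2, by omega⟩
      have h1 : c + 1 ≤ m' + 1 := by omega
      have h2 : (m' + 1) * (c + 1) ≤ (m' + 1) * (m' + 1) := Nat.mul_le_mul_left _ h1
      simp only [show m' + 2 - 1 = m' + 1 by omega] at hsum herase
      nlinarith [hsum, hsplit, herase]
    -- makespan bound
    have hload : idLoad p σ jstar = (c : ℝ) + ((m : ℝ) - 1) := by
      rw [load_eq p hp, if_pos rfl]
    have hb : BddAbove (Set.range (idLoad p σ)) := (Set.finite_range _).bddAbove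
    have hle : idLoad p σ jstar ≤ ⨆ j, idLoad p σ j := le_ciSup hb jstar
    have hcge' : (m : ℝ) - 1 ≤ (c : ℝ) := by
      have : ((m - 1 : ℕ) : ℝ) ≤ (c : ℝ) := by exact_mod_cast hcge
      rw [hm1cast] at this
      exact this
    have h2m : 2 / (m : ℝ) * m = 2 := by field_simp
    have hexp : (2 - 2 / (m : ℝ)) * m = 2 * m - 2 := by rw [sub_mul, h2m]
    rw [hexp]
    rw [hload] at hle
    linarith
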